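/- Let R = ℤ[x]/(2x² + x). Then the localization R[x⁻¹] of R at the element x is isomorphic as a ring to ℤ[1/2], via the map sending x to −1/2. -/

import Mathlib

/-- The ring R = ℤ[x]/(2x² + x). -/
abbrev boronRing : Type :=
  Polynomial ℤ ⧸ Ideal.span {2 * Polynomial.X ^ 2 + (Polynomial.X : Polynomial ℤ)}

/-- The class x of the variable X in R = ℤ[x]/(2x² + x). -/
noncomputable abbrev boronX : boronRing :=
  Ideal.Quotient.mk (Ideal.span {2 * Polynomial.X ^ 2 + (Polynomial.X : Polynomial ℤ)})
    Polynomial.X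

noncomputable abbrev BT := Localization.Away (2 : ℤ)
noncomputable abbrev BS := Localization.Away boronX

noncomputable def bt : BT := Localization.mk (-1) ⟨2, Submonoid.mem_powers 2⟩

lemma bt_spec : (2 : BT) * bt = -1 := by
  have h2 : (2 : BT) = algebraMap ℤ BT 2 := by simp
  rw [h2, bt, Localization.mk_eq_mk', mul_comm, IsLocalization.mk'_spec]
  simp

lemma bt_root : 2 * bt ^ 2 + bt = 0 := by
  linear_combination bt * bt_spec

noncomputable def bφ : boronRing →+* BT :=
  Ideal.Quotient.lift _ ((Polynomial.aeval bt).toRingHom : Polynomial ℤ →+* BT) (by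
    intro p hp
    rw [Ideal.mem_span_singleton] at hp
    obtain ⟨q, rfl⟩ := hp
    simp only [map_mul, map_add, map_pow, map_ofNat, AlgHom.toRingHom_eq_coe,
      RingHom.coe_coe, Polynomial.aeval_X, bt_root, zero_mul])

lemma bφ_X : bφ boronX = bt := by simp [bφ, boronX]

lemma bφ_unit : IsUnit (bφ boronX) := by
  rw [bφ_X]
  exact isUnit_iff_exists_inv.mpr ⟨-2, by linear_combination -bt_spec⟩

noncomputable def bf : BS →+* BT := IsLocalization.Away.lift (S := BS) boronX bφ_unit

lemma bf_eq (a : boronRing) : bf (algebraMap boronRing BS a) = bφ a :=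
  IsLocalization.Away.lift_eq boronX bφ_unit a

/-- Generic commutative-ring computation 1. -/
lemma aux1 {R : Type*} [CommRing R] (c x v : R) (h1 : x * (c * x + 1) = 0)
    (hv : x * v = 1) : c * x = -1 := by
  linear_combination v * h1 - (c * x + 1) * hv

/-- Generic commutative-ring computation 2. -/
lemma aux2 {R : Type*} [CommRing R] (c x : R) (h : c * x = -1) : c * -x = 1 := by
  linear_combination -h

/-- Generic commutative-ring computation 3. -/
lemma aux3 {R : Type*} [CommRing R] (c x y v : R) (h : c * y = -1)
    (rel : c * x = -1) (hv : c * v = 1) : y = x := by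
  linear_combination v * h - v * rel - (y - x) * hv

lemma bs_rel : (2 : BS) * algebraMap boronRing BS boronX = -1 := by
  have hx : IsUnit (algebraMap boronRing BS boronX) :=
    IsLocalization.map_units BS (⟨boronX, Submonoid.mem_powers _⟩ : Submonoid.powers boronX)
  have hmem : (Polynomial.X * (2 * Polynomial.X + 1) : Polynomial ℤ) ∈
      Ideal.span {2 * Polynomial.X ^ 2 + (Polynomial.X : Polynomial ℤ)} := by
    rw [Ideal.mem_span_singleton]; exact ⟨1, by ring⟩
  have h0 : boronX * (2 * boronX + 1) = 0 := by
    have := Ideal.Quotient.eq_zero_iff_mem.mpr hmem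
    rw [map_mul, map_add, map_mul, map_ofNat, map_one] at this
    exact this
  set x := algebraMap boronRing BS boronX with hxdef
  have h1 : x * (2 * x + 1) = 0 := by
    have := congrArg (algebraMap boronRing BS) h0
    rw [map_mul, map_add, map_mul, map_one, map_ofNat, map_zero] at this
    exact this
  obtain ⟨v, hv⟩ := isUnit_iff_exists_inv.mp hx
  exact aux1 (2 : BS) x v h1 hv

lemma bs_two_unit : IsUnit ((algebraMap ℤ BS) 2) := by
  rw [map_ofNat]
  exact isUnit_iff_exists_inv.mpr
    ⟨-(algebraMap boronRing BS boronX), aux2 (2 : BS) _ bs_rel⟩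

noncomputable def bg : BT →+* BS := IsLocalization.Away.lift (S := BT) 2 bs_two_unit

lemma bg_bt : bg bt = algebraMap boronRing BS boronX := by
  have h : bg ((2 : BT) * bt) = bg (-1) := congrArg bg bt_spec
  rw [map_mul, map_neg, map_one, map_ofNat] at h
  have h2u : IsUnit (2 : BS) := by have := bs_two_unit; rwa [map_ofNat] at this
  obtain ⟨v, hv⟩ := isUnit_iff_exists_inv.mp h2u
  exact aux3 (2 : BS) _ _ v h bs_rel hv

lemma bgφ : bg.comp bφ = algebraMap boronRing BS := by
  apply Ideal.Quotient.ringHom_ext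
  apply Polynomial.ringHom_ext'
  · exact Subsingleton.elim _ _
  · show bg (bφ boronX) = algebraMap boronRing BS boronX
    rw [bφ_X, bg_bt]

lemma bgf : bg.comp bf = RingHom.id BS := by
  have hcomp : (bg.comp bf).comp (algebraMap boronRing BS) =
      (RingHom.id BS).comp (algebraMap boronRing BS) := by
    rw [RingHom.comp_assoc]
    have h1 : bf.comp (algebraMap boronRing BS) = bφ := IsLocalization.Away.lift_comp boronX bφ_unit
    rw [h1, RingHom.id_comp, bgφ]
  exact IsLocalization.ringHom_ext (R := boronRing) (S := BS) (P := BS)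
    (Submonoid.powers boronX) hcomp

lemma bfg : bf.comp bg = RingHom.id BT := by
  exact IsLocalization.ringHom_ext (R := ℤ) (S := BT) (P := BT)
    (Submonoid.powers (2 : ℤ)) (Subsingleton.elim _ _)

/-- Let R = ℤ[x]/(2x² + x).  The localization R[x⁻¹] of R at x is isomorphic
as a ring to ℤ[1/2] (the localization of ℤ away from 2), via the map sending x to −1/2. -/
theorem boron_theta_localization :
    ∃ e : Localization.Away boronX ≃+* Localization.Away (2 : ℤ),
      e (algebraMap boronRing (Localization.Away boronX) boronX) =
        Localization.mk (-1) ⟨2, Submonoid.mem_powers 2⟩ := by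
  refine ⟨RingEquiv.ofRingHom bf bg bfg bgf, ?_⟩
  show bf (algebraMap boronRing BS boronX) = bt
  rw [bf_eq, bφ_X]
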